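/- Let K be a field of characteristic p > 3. For integers −1 ≤ i, j ≤ p−2 define λ_{ij} ∈ K by λ_{ij} = Σ_{k=1}^{i} binom(i+j+1−k, j+1)·(k+2)·(k(k+1))^{−1} (binomial coefficients reduced mod p; the sum is empty for i ≤ 0), and let N_{ij} ∈ K be the image of binom(i+j+1, j) − binom(i+j+1, i). Then: (a) for all integers j, k ≥ 1 with j + k = p − 1, λ_{j−1,k} + λ_{j,k−1} = (−1)^k (2k+1)·(k(k+1))^{−1}; (b) for all integers j, k ≥ 1 with j + k = p − 1, λ_{j,k−1} − λ_{k,j−1} = 2(−1)^k λ_{j,−1} + 2(−1)^{k+1} λ_{k,−1} + (−1)^{k+1}(2k+1)·(k(k+1))^{−1}; (c) for all integers i, j, k ≥ 0 with i + j + k < p − 1, N_{ij}λ_{i+j,k} − N_{jk}λ_{i,j+k} + N_{ik}λ_{j,i+k} + N_{j+k,i}λ_{jk} − N_{i+k,j}λ_{ik} = 0. -/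

import Mathlib

/-!
STATEMENT 12: char K = p > 3; λ_{ij} = Σ_{k=1}^{i} binom(i+j+1−k, j+1)·(k+2)·(k(k+1))⁻¹
and N_{ij} = binom(i+j+1,j) − binom(i+j+1,i) in K.  Then:
(a) λ_{j−1,k} + λ_{j,k−1} = (−1)^k (2k+1)·(k(k+1))⁻¹ for j,k ≥ 1, j+k = p−1;
(b) λ_{j,k−1} − λ_{k,j−1} = 2(−1)^k λ_{j,−1} + 2(−1)^{k+1} λ_{k,−1}
      + (−1)^{k+1}(2k+1)·(k(k+1))⁻¹ for j,k ≥ 1, j+k = p−1;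
(c) N_{ij}λ_{i+j,k} − N_{jk}λ_{i,j+k} + N_{ik}λ_{j,i+k} + N_{j+k,i}λ_{jk} − N_{i+k,j}λ_{ik} = 0
      for i,j,k ≥ 0 with i+j+k < p−1.
-/

/-- Binomial coefficient `binom a b` of integers, reduced into `K`
(zero when either argument is negative). -/
def chK (K : Type) [Field K] (a b : ℤ) : K :=
  if a < 0 ∨ b < 0 then 0 else ((a.toNat.choose b.toNat : ℕ) : K)

/-- The structure constants `N_{ij} = binom (i+j+1) j - binom (i+j+1) i`,
as elements of `K`. -/
def wittN (K : Type) [Field K] (i j : ℤ) : K :=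
  chK K (i + j + 1) j - chK K (i + j + 1) i

/-- `λ_{ij} = Σ_{k=1}^{i} binom(i+j+1−k, j+1) · (k+2) · (k(k+1))⁻¹ ∈ K`. -/
noncomputable def lamK (K : Type) [Field K] (i j : ℤ) : K :=
  ∑ k ∈ Finset.Icc (1 : ℤ) i,
    chK K (i + j + 1 - k) (j + 1) * ((k : K) + 2) * ((k : K) * ((k : K) + 1))⁻¹

namespace St12
open Finset Nat

/-! ### Rational-side lemmas -/

noncomputable def HQ (t : ℕ) : ℚ := ∑ m ∈ Icc 1 t, ((m : ℚ))⁻¹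

noncomputable def VQ (n r : ℕ) : ℚ :=
  ∑ m ∈ Icc 1 (n - r), ((n - m).choose r : ℚ) * ((m : ℚ))⁻¹

def NQ (a b : ℕ) : ℚ := ((a+b+1).choose b : ℚ) - ((a+b+1).choose a : ℚ)

noncomputable def lamQ (a b : ℕ) : ℚ :=
  ∑ m ∈ Icc 1 a, ((a+b+1-m).choose (b+1) : ℚ) * ((m:ℚ)+2) * (((m:ℚ)) * ((m:ℚ)+1))⁻¹

lemma HQ_succ (t : ℕ) : HQ (t + 1) = HQ t + ((t : ℚ) + 1)⁻¹ := by
  unfold HQ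
  rw [Finset.sum_Icc_succ_top (by omega)]
  push_cast; ring

lemma VQ_eq : ∀ n r : ℕ, r ≤ n → VQ n r = (n.choose r : ℚ) * (HQ n - HQ r) := by
  intro n
  induction n with
  | zero => intro r hr; interval_cases r; simp [VQ, HQ]
  | succ n ih =>
    rintro (_ | r') hr
    · simp only [VQ, Nat.sub_zero, Nat.choose_zero_right, Nat.cast_one, one_mul]
      simp [HQ]
    · by_cases hnr : r' + 1 ≤ n
      · have key : VQ (n+1) (r'+1) = VQ n (r'+1) + VQ n r' := by
          unfold VQ
          have e1 : ∀ m ∈ Icc 1 (n + 1 - (r'+1)), ((n + 1 - m).choose (r'+1) : ℚ) * ((m:ℚ))⁻¹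
              = ((n - m).choose (r'+1) : ℚ) * ((m:ℚ))⁻¹ + ((n - m).choose r' : ℚ) * ((m:ℚ))⁻¹ := by
            intro m hm
            simp only [mem_Icc] at hm
            have h2 : n + 1 - m = (n - m) + 1 := by omega
            rw [h2, Nat.choose_succ_succ (n - m) r']
            push_cast; ring
          rw [Finset.sum_congr rfl e1, Finset.sum_add_distrib]
          congr 1
          · have e2 : n + 1 - (r'+1) = (n - (r'+1)) + 1 := by omega
            rw [e2, Finset.sum_Icc_succ_top (by omega)]
            have e3 : n - (n - (r'+1) + 1) = r' := by omega
            rw [e3]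
            simp [Nat.choose_succ_self]
          · have e4 : n + 1 - (r'+1) = n - r' := by omega
            rw [e4]
        rw [key, ih (r'+1) hnr, ih r' (by omega)]
        have hC : ((n+1).choose (r'+1) : ℚ) = (n.choose (r'+1) : ℚ) + (n.choose r' : ℚ) := by
          rw [Nat.choose_succ_succ n r']; push_cast; ring
        have hc1 : (n.choose (r'+1) : ℚ) = ((n+1).choose (r'+1) : ℚ) - (n.choose r' : ℚ) := by
          linarith
        have hr2 : ((n:ℚ)+1) * (n.choose r' : ℚ) = ((n+1).choose (r'+1) : ℚ) * ((r':ℚ)+1) := by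
          exact_mod_cast congrArg (Nat.cast : ℕ → ℚ) (Nat.add_one_mul_choose_eq n r')
        have hn1 : ((n:ℚ)+1) ≠ 0 := by positivity
        have hr1 : ((r':ℚ)+1) ≠ 0 := by positivity
        have h3 : (n.choose r' : ℚ) * (((r':ℚ)+1))⁻¹ = ((n+1).choose (r'+1) : ℚ) * (((n:ℚ)+1))⁻¹ := by
          field_simp
          linarith [hr2]
        rw [HQ_succ n, HQ_succ r', hc1]
        linear_combination h3
      · have hre : r' + 1 = n + 1 := by omega
        rw [hre]
        unfold VQ
        simp

lemma lamQ_split (a b : ℕ) :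
    lamQ a b = 2 * VQ (a+b+1) (b+1) - VQ (a+b+2) (b+1) + ((a+b+1).choose (b+1) : ℚ) := by
  have h1 : lamQ a b = (∑ m ∈ Icc 1 a, ((a+b+1-m).choose (b+1) : ℚ) * (2 * ((m:ℚ))⁻¹))
      - ∑ m ∈ Icc 1 a, ((a+b+1-m).choose (b+1) : ℚ) * (((m:ℚ)+1))⁻¹ := by
    rw [← Finset.sum_sub_distrib]
    apply Finset.sum_congr rfl
    intro m hm
    simp only [mem_Icc] at hm
    have hm0 : ((m:ℚ)) ≠ 0 := Nat.cast_ne_zero.mpr (by omega)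
    have hm1 : ((m:ℚ)+1) ≠ 0 := by positivity
    field_simp
    ring
  rw [h1]
  have h2 : (∑ m ∈ Icc 1 a, ((a+b+1-m).choose (b+1) : ℚ) * (2 * ((m:ℚ))⁻¹))
      = 2 * VQ (a+b+1) (b+1) := by
    rw [VQ, Finset.mul_sum]
    have e : a+b+1-(b+1) = a := by omega
    rw [e]
    apply Finset.sum_congr rfl
    intro m hm; ring
  have h3 : (∑ m ∈ Icc 1 a, ((a+b+1-m).choose (b+1) : ℚ) * (((m:ℚ)+1))⁻¹)
      = VQ (a+b+2) (b+1) - ((a+b+1).choose (b+1) : ℚ) := by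
    rw [VQ]
    have e : a+b+2-(b+1) = a+1 := by omega
    rw [e]
    rw [Finset.Icc_eq_cons_Ioc (by omega : 1 ≤ a+1), Finset.sum_cons]
    have e2 : a + b + 2 - 1 = a+b+1 := by omega
    rw [e2]
    simp only [Nat.cast_one, inv_one, mul_one]
    have h4 : ∑ m ∈ Ioc 1 (a+1), ((a+b+2-m).choose (b+1) : ℚ) * ((m:ℚ))⁻¹
        = ∑ m ∈ Icc 1 a, ((a+b+1-m).choose (b+1) : ℚ) * (((m:ℚ)+1))⁻¹ := by
      apply Finset.sum_nbij' (fun m => m - 1) (fun m => m + 1)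
      · intro m hm; simp only [mem_Ioc, mem_Icc] at *; omega
      · intro m hm; simp only [mem_Ioc, mem_Icc] at *; omega
      · intro m hm; simp only [mem_Ioc] at hm; omega
      · intro m hm; omega
      · intro m hm
        simp only [mem_Ioc] at hm
        have e3 : a+b+1-(m-1) = a+b+2-m := by omega
        have e4 : ((m - 1 : ℕ) : ℚ) + 1 = (m : ℚ) := by
          have : ((m - 1 : ℕ) : ℚ) = (m : ℚ) - 1 := by
            rw [Nat.cast_sub (by omega)]; norm_num
          rw [this]; ring
        rw [e3, e4]
    rw [h4]; ring
  rw [h2, h3]; ring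

lemma choose_symm_cast (a b : ℕ) : ((a+b+1).choose a : ℚ) = ((a+b+1).choose (b+1) : ℚ) := by
  have := Nat.choose_symm (show a ≤ a+b+1 by omega)
  have e : a+b+1-a = b+1 := by omega
  rw [e] at this
  rw [this]

lemma lamQ_cf (a b : ℕ) :
    lamQ a b = -NQ a b * (HQ (a+b+1) - HQ (b+1))
      + (a:ℚ) * ((a+b+1)! : ℚ) / (((a+1)! : ℚ) * ((b+1)! : ℚ)) := by
  rw [lamQ_split, VQ_eq (a+b+1) (b+1) (by omega),
    show a+b+2 = (a+b+1)+1 from by omega, VQ_eq ((a+b+1)+1) (b+1) (by omega), HQ_succ (a+b+1)]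
  have hP : (((a+b+1)+1).choose (b+1) : ℚ)
      = ((a+b+1).choose (b+1) : ℚ) + ((a+b+1).choose b : ℚ) := by
    rw [Nat.choose_succ_succ (a+b+1) b]
    push_cast; ring
  have hN : NQ a b = ((a+b+1).choose b : ℚ) - ((a+b+1).choose (b+1) : ℚ) := by
    rw [NQ, choose_symm_cast]
  have hfac : ((a+b+1).choose (b+1) : ℚ) - (((a+b+1)+1).choose (b+1) : ℚ) * (((a+b+1 : ℕ):ℚ)+1)⁻¹
      = (a:ℚ) * ((a+b+1)! : ℚ) / (((a+1)! : ℚ) * ((b+1)! : ℚ)) := by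
    rw [Nat.cast_choose ℚ (show b+1 ≤ a+b+1 by omega),
        Nat.cast_choose ℚ (show b+1 ≤ (a+b+1)+1 by omega)]
    have e1 : a+b+1-(b+1) = a := by omega
    have e2 : (a+b+1)+1-(b+1) = a+1 := by omega
    rw [e1, e2]
    have f1 : (((a+b+1)+1)! : ℚ) = (((a+b+1 : ℕ):ℚ)+1) * ((a+b+1)! : ℚ) := by
      rw [Nat.factorial_succ]; push_cast; ring
    have f2 : ((a+1)! : ℚ) = ((a:ℚ)+1) * ((a)! : ℚ) := by
      rw [Nat.factorial_succ]; push_cast; ring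
    rw [f1, f2]
    have n1 : ((a:ℚ)+1) ≠ 0 := by positivity
    have n2 : ((a+b+1:ℕ):ℚ)+1 ≠ 0 := by positivity
    have n3 : ((a)! : ℚ) ≠ 0 := by exact_mod_cast Nat.factorial_ne_zero a
    have n4 : ((b+1)! : ℚ) ≠ 0 := by exact_mod_cast Nat.factorial_ne_zero (b+1)
    field_simp
    ring
  rw [hN]
  linear_combination (-(HQ (a+b+1) - HQ (b+1))) * hP + hfac

lemma NQf (a b : ℕ) :
    NQ a b = ((b:ℚ) - (a:ℚ)) * ((a+b+1)! : ℚ) / (((a+1)! : ℚ) * ((b+1)! : ℚ)) := by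
  rw [NQ, Nat.cast_choose ℚ (show b ≤ a+b+1 by omega),
      Nat.cast_choose ℚ (show a ≤ a+b+1 by omega)]
  have e1 : a+b+1-b = a+1 := by omega
  have e2 : a+b+1-a = b+1 := by omega
  rw [e1, e2]
  have f2 : ((a+1)! : ℚ) = ((a:ℚ)+1) * ((a)! : ℚ) := by
    rw [Nat.factorial_succ]; push_cast; ring
  have f3 : ((b+1)! : ℚ) = ((b:ℚ)+1) * ((b)! : ℚ) := by
    rw [Nat.factorial_succ]; push_cast; ring
  rw [f2, f3]
  have n1 : ((a:ℚ)+1) ≠ 0 := by positivity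
  have n2 : ((b:ℚ)+1) ≠ 0 := by positivity
  have n3 : ((a)! : ℚ) ≠ 0 := by exact_mod_cast Nat.factorial_ne_zero a
  have n4 : ((b)! : ℚ) ≠ 0 := by exact_mod_cast Nat.factorial_ne_zero b
  field_simp
  ring

lemma mainQ (i j k : ℕ) :
    NQ i j * lamQ (i+j) k - NQ j k * lamQ i (j+k) + NQ i k * lamQ j (i+k)
      + NQ (j+k) i * lamQ j k - NQ (i+k) j * lamQ i k = 0 := by
  rw [lamQ_cf (i+j) k, lamQ_cf i (j+k), lamQ_cf j (i+k), lamQ_cf j k, lamQ_cf i k]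
  rw [NQf i j, NQf j k, NQf i k, NQf (j+k) i, NQf (i+k) j,
      NQf (i+j) k, NQf i (j+k), NQf j (i+k)]
  have e1 : i + (j+k) = i+j+k := by ring
  have e2 : j + (i+k) = i+j+k := by ring
  have e3 : (j+k) + i = i+j+k := by ring
  have e4 : (i+k) + j = i+j+k := by ring
  rw [e1, e2, e3, e4]
  have n1 : ((i+1)! : ℚ) ≠ 0 := by exact_mod_cast Nat.factorial_ne_zero (i+1)
  have n2 : ((j+1)! : ℚ) ≠ 0 := by exact_mod_cast Nat.factorial_ne_zero (j+1)
  have n3 : ((k+1)! : ℚ) ≠ 0 := by exact_mod_cast Nat.factorial_ne_zero (k+1)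
  have n4 : ((i+j+1)! : ℚ) ≠ 0 := by exact_mod_cast Nat.factorial_ne_zero (i+j+1)
  have n5 : ((j+k+1)! : ℚ) ≠ 0 := by exact_mod_cast Nat.factorial_ne_zero (j+k+1)
  have n6 : ((i+k+1)! : ℚ) ≠ 0 := by exact_mod_cast Nat.factorial_ne_zero (i+k+1)
  field_simp
  push_cast
  ring

/-! ### K-side lemmas -/

lemma hprime (K : Type) [Field K] (p : ℕ) [CharP K p] (hp : 3 < p) : p.Prime := by
  rcases CharP.char_is_prime_or_zero K p with h | h
  · exact h
  · subst h; omega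

section Kside
variable (K : Type) [Field K] (p : ℕ) [CharP K p] (hp : 3 < p)

noncomputable def Hk (t : ℕ) : K := ∑ m ∈ Icc 1 t, ((m : K))⁻¹

lemma castK_ne {m : ℕ} (h1 : 0 < m) (h2 : m < p) : (m : K) ≠ 0 := by
  intro h
  rw [CharP.cast_eq_zero_iff K p] at h
  have := Nat.le_of_dvd h1 h
  omega

lemma Hk_succ (t : ℕ) : Hk K (t + 1) = Hk K t + ((t : K) + 1)⁻¹ := by
  unfold Hk
  rw [Finset.sum_Icc_succ_top (by omega)]
  push_cast; ring

include hp

lemma W : Hk K (p - 1) = 0 := by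
  have h2 : (2 : K) ≠ 0 := by
    have := castK_ne K p (show 0 < 2 by norm_num) (by omega)
    simpa using this
  have key : Hk K (p-1) = - Hk K (p-1) := by
    unfold Hk
    have step : ∑ m ∈ Icc 1 (p-1), ((m : K))⁻¹ = ∑ m ∈ Icc 1 (p-1), (((p - m : ℕ) : K))⁻¹ := by
      apply Finset.sum_nbij' (fun m => p - m) (fun m => p - m)
      · intro a ha; simp only [mem_Icc] at *; omega
      · intro a ha; simp only [mem_Icc] at *; omega
      · intro a ha; simp only [mem_Icc] at ha; omega
      · intro a ha; simp only [mem_Icc] at ha; omega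
      · intro a ha; simp only [mem_Icc] at ha
        congr 2
        omega
    have hneg : ∀ m ∈ Icc 1 (p-1), (((p - m : ℕ) : K))⁻¹ = - ((m:K))⁻¹ := by
      intro m hm
      simp only [mem_Icc] at hm
      have hc : ((p - m : ℕ) : K) = - (m : K) := by
        rw [Nat.cast_sub (by omega), CharP.cast_eq_zero K p]
        ring
      rw [hc, inv_neg]
    calc ∑ m ∈ Icc 1 (p-1), ((m : K))⁻¹
        = ∑ m ∈ Icc 1 (p-1), (((p - m : ℕ) : K))⁻¹ := step
      _ = ∑ m ∈ Icc 1 (p-1), - ((m:K))⁻¹ := Finset.sum_congr rfl hneg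
      _ = - ∑ m ∈ Icc 1 (p-1), ((m:K))⁻¹ := by rw [Finset.sum_neg_distrib]
  have h0 : (2:K) * Hk K (p-1) = 0 := by linear_combination key
  rcases mul_eq_zero.mp h0 with h | h
  · exact absurd h h2
  · exact h

lemma B1 : ∀ c : ℕ, c ≤ p - 1 → (((p-1).choose c : ℕ) : K) = (-1 : K)^c := by
  intro c
  induction c with
  | zero => intro _; simp
  | succ c ih =>
    intro hc
    have hPa : (p-1).choose c + (p-1).choose (c+1) = p.choose (c+1) := by
      have h := Nat.choose_succ_succ (p-1) c
      simp only [Nat.succ_eq_add_one] at h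
      have e : p - 1 + 1 = p := by omega
      rw [e] at h
      omega
    have hzero : ((p.choose (c+1) : ℕ) : K) = 0 := by
      rw [CharP.cast_eq_zero_iff K p]
      exact Nat.Prime.dvd_choose_self (hprime K p hp) (by omega) (by omega)
    have hcast : (((p-1).choose c : ℕ) : K) + (((p-1).choose (c+1) : ℕ) : K) = 0 := by
      rw [← Nat.cast_add, hPa, hzero]
    rw [ih (by omega)] at hcast
    rw [pow_succ]
    linear_combination hcast

lemma B2 : ∀ c : ℕ, c ≤ p - 1 → (((p-2).choose c : ℕ) : K) = (-1 : K)^c * ((c : K) + 1) := by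
  intro c
  induction c with
  | zero => intro _; simp
  | succ c ih =>
    intro hc
    have hPa : (p-2).choose c + (p-2).choose (c+1) = (p-1).choose (c+1) := by
      have h := Nat.choose_succ_succ (p-2) c
      simp only [Nat.succ_eq_add_one] at h
      have e : p - 2 + 1 = p - 1 := by omega
      rw [e] at h
      omega
    have hcast : (((p-2).choose c : ℕ) : K) + (((p-2).choose (c+1) : ℕ) : K)
        = (((p-1).choose (c+1) : ℕ) : K) := by
      rw [← Nat.cast_add, hPa]
    rw [ih (by omega), B1 K p hp (c+1) (by omega)] at hcast
    rw [pow_succ]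
    push_cast at hcast ⊢
    linear_combination hcast

lemma Slem : ∀ c : ℕ, c ≤ p - 1 →
    ∑ n ∈ Icc c (p-2), ((n.choose c : ℕ) : K) * ((n : K) + 1)⁻¹ = (-1 : K)^c * Hk K c := by
  intro c
  induction c with
  | zero =>
    intro _
    have h : ∑ n ∈ Icc 0 (p-2), ((n.choose 0 : ℕ) : K) * ((n : K) + 1)⁻¹ = Hk K (p-1) := by
      unfold Hk
      apply Finset.sum_nbij' (fun n => n + 1) (fun m => m - 1)
      · intro a ha; simp only [mem_Icc] at *; omega
      · intro a ha; simp only [mem_Icc] at *; omega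
      · intro a ha; omega
      · intro a ha; simp only [mem_Icc] at ha; omega
      · intro a ha
        simp only [Nat.choose_zero_right, Nat.cast_one, one_mul]
        push_cast
        ring
    rw [h, W K p hp]
    simp [Hk]
  | succ c ih =>
    intro hc
    have hsplit : ∑ n ∈ Icc c (p-2), ((n.choose (c+1) : ℕ) : K) * ((n : K) + 1)⁻¹
        = ∑ n ∈ Icc (c+1) (p-2), ((n.choose (c+1) : ℕ) : K) * ((n : K) + 1)⁻¹ := by
      rw [Finset.Icc_eq_cons_Ioc (by omega : c ≤ p-2), Finset.sum_cons, ← Finset.Icc_add_one_left_eq_Ioc]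
      simp [Nat.choose_succ_self]
    have hterm : ∀ n ∈ Icc c (p-2), ((n.choose (c+1) : ℕ) : K) * ((n : K) + 1)⁻¹
        = ((n.choose c : ℕ) : K) * ((c : K) + 1)⁻¹ - ((n.choose c : ℕ) : K) * ((n : K) + 1)⁻¹ := by
      intro n hn
      simp only [mem_Icc] at hn
      have hn1 : ((n : K) + 1) ≠ 0 := by
        have := castK_ne K p (show 0 < n+1 by omega) (by omega)
        push_cast at this
        exact this
      have hc1 : ((c : K) + 1) ≠ 0 := by
        have := castK_ne K p (show 0 < c+1 by omega) (by omega)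
        push_cast at this
        exact this
      have hmul : ((n:K) + 1) * ((n.choose c : ℕ) : K) = (((n+1).choose (c+1) : ℕ) : K) * ((c:K) + 1) := by
        have h0 := Nat.add_one_mul_choose_eq n c
        have h := congrArg (Nat.cast : ℕ → K) h0
        push_cast at h
        linear_combination h
      have hPa : (((n+1).choose (c+1) : ℕ) : K) = ((n.choose c : ℕ) : K) + ((n.choose (c+1) : ℕ) : K) := by
        rw [Nat.choose_succ_succ n c]
        push_cast; ring
      have hZ : (((n+1).choose (c+1) : ℕ) : K) * ((n:K) + 1)⁻¹ = ((n.choose c : ℕ) : K) * ((c:K) + 1)⁻¹ := by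
        field_simp
        linear_combination -hmul
      linear_combination (-(((n:K)+1)⁻¹)) * hPa + hZ
    rw [← hsplit, Finset.sum_congr rfl hterm, Finset.sum_sub_distrib, ih (by omega)]
    have hhs : ∑ n ∈ Icc c (p-2), ((n.choose c : ℕ) : K) * ((c : K) + 1)⁻¹
        = (((p-1).choose (c+1) : ℕ) : K) * ((c : K) + 1)⁻¹ := by
      rw [← Finset.sum_mul]
      congr 1
      rw [← Nat.cast_sum]
      congr 1
      have h := Nat.sum_Icc_choose (p-2) c
      have e : p - 2 + 1 = p - 1 := by omega
      rw [e] at h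
      exact h
    rw [hhs, B1 K p hp (c+1) (by omega), Hk_succ, pow_succ]
    ring

lemma Tlem (c : ℕ) (hc1 : 1 ≤ c) (hc2 : c ≤ p - 1) :
    ∑ n ∈ Icc c (p-2), ((n.choose c : ℕ) : K) * ((n : K))⁻¹
      = (((p-2).choose c : ℕ) : K) * ((c : K))⁻¹ := by
  have hterm : ∀ n ∈ Icc c (p-2), ((n.choose c : ℕ) : K) * ((n : K))⁻¹
      = (((n-1).choose (c-1) : ℕ) : K) * ((c : K))⁻¹ := by
    intro n hn
    simp only [mem_Icc] at hn
    have hn0 : ((n : K)) ≠ 0 := castK_ne K p (by omega) (by omega)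
    have hc0 : ((c : K)) ≠ 0 := castK_ne K p (by omega) (by omega)
    have hmul : (n : K) * (((n-1).choose (c-1) : ℕ) : K) = ((n.choose c : ℕ) : K) * (c : K) := by
      have h := Nat.add_one_mul_choose_eq (n-1) (c-1)
      have e1 : n - 1 + 1 = n := by omega
      have e2 : c - 1 + 1 = c := by omega
      rw [e1, e2] at h
      exact_mod_cast congrArg (Nat.cast : ℕ → K) h
    field_simp
    linear_combination -hmul
  rw [Finset.sum_congr rfl hterm, ← Finset.sum_mul]
  congr 1
  rw [← Nat.cast_sum]
  congr 1
  have step : ∑ n ∈ Icc c (p-2), (n-1).choose (c-1) = ∑ t ∈ Icc (c-1) (p-3), t.choose (c-1) := by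
    apply Finset.sum_nbij' (fun n => n - 1) (fun t => t + 1)
    · intro a ha; simp only [mem_Icc] at *; omega
    · intro a ha; simp only [mem_Icc] at *; omega
    · intro a ha; simp only [mem_Icc] at ha; omega
    · intro a ha; omega
    · intro a ha; rfl
  rw [step]
  have h := Nat.sum_Icc_choose (p-3) (c-1)
  have e1 : p - 3 + 1 = p - 2 := by omega
  have e2 : c - 1 + 1 = c := by omega
  rw [e1, e2] at h
  exact h

lemma reindex (c : ℕ) (hc1 : 1 ≤ c) (hc2 : c ≤ p - 1) :
    lamK K ((p:ℤ) - 1 - c) ((c:ℤ) - 1)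
      = ∑ n ∈ Icc c (p-2), ((n.choose c : ℕ) : K) * (((n:K))⁻¹ - 2 * ((n:K) + 1)⁻¹) := by
  unfold lamK
  apply Finset.sum_nbij' (fun m => ((p:ℤ) - 1 - m).toNat) (fun n => (p:ℤ) - 1 - (n:ℤ))
  · intro a ha; simp only [Finset.mem_Icc] at *; omega
  · intro a ha; simp only [Finset.mem_Icc] at *; omega
  · intro a ha; simp only [Finset.mem_Icc] at ha; omega
  · intro a ha; simp only [Finset.mem_Icc] at ha; omega
  · intro m hm
    simp only [Finset.mem_Icc] at hm
    have harg : (p:ℤ) - 1 - (c:ℤ) + ((c:ℤ) - 1) + 1 - m = (p:ℤ) - 1 - m := by ring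
    have harg2 : (c:ℤ) - 1 + 1 = (c:ℤ) := by ring
    rw [harg, harg2]
    set n : ℕ := ((p:ℤ) - 1 - m).toNat with hn
    have hch : chK K ((p:ℤ) - 1 - m) (c:ℤ) = ((n.choose c : ℕ) : K) := by
      unfold chK
      rw [if_neg (by omega)]
      have e1 : ((c:ℤ)).toNat = c := by omega
      rw [e1]
    rw [hch]
    have hmK : ((m:ℤ) : K) = -1 - (n : K) := by
      have hm_eq : m = (p:ℤ) - 1 - (n:ℤ) := by omega
      rw [hm_eq]
      push_cast
      rw [CharP.cast_eq_zero K p]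
      ring
    rw [hmK]
    have hn0 : ((n : K)) ≠ 0 := castK_ne K p (by omega) (by omega)
    have hn1 : ((n : K) + 1) ≠ 0 := by
      have := castK_ne K p (show 0 < n+1 by omega) (by omega)
      push_cast at this
      exact this
    have hr : ((n:K))⁻¹ - 2 * ((n:K)+1)⁻¹ = (1 - (n:K)) * ((n:K) * ((n:K)+1))⁻¹ := by
      rw [mul_inv]
      field_simp
      ring
    rw [hr]
    have ed : (-1 - (n:K)) * (-1 - (n:K) + 1) = (n:K) * ((n:K) + 1) := by ring
    rw [ed]
    ring

lemma LA (c : ℕ) (hc1 : 1 ≤ c) (hc2 : c ≤ p - 1) :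
    lamK K ((p:ℤ) - 1 - c) ((c:ℤ) - 1)
      = (-1:K)^c * (((c:K) + 1) * ((c:K))⁻¹ - 2 * Hk K c) := by
  rw [reindex K p hp c hc1 hc2]
  have hs : ∑ n ∈ Icc c (p-2), ((n.choose c : ℕ) : K) * (((n:K))⁻¹ - 2 * ((n:K) + 1)⁻¹)
      = (∑ n ∈ Icc c (p-2), ((n.choose c : ℕ) : K) * ((n:K))⁻¹)
        - 2 * ∑ n ∈ Icc c (p-2), ((n.choose c : ℕ) : K) * ((n:K) + 1)⁻¹ := by
    rw [Finset.mul_sum, ← Finset.sum_sub_distrib]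
    apply Finset.sum_congr rfl
    intro n hn; ring
  rw [hs, Tlem K p hp c hc1 hc2, Slem K p hp c hc2, B2 K p hp c hc2]
  ring

lemma lam_neg_sum (n : ℕ) :
    lamK K (n:ℤ) (-1) = ∑ m ∈ Icc 1 n, ((m:K) + 2) * ((m:K) * ((m:K) + 1))⁻¹ := by
  unfold lamK
  apply Finset.sum_nbij' (fun m : ℤ => m.toNat) (fun m : ℕ => (m : ℤ))
  · intro a ha; simp only [Finset.mem_Icc] at *; omega
  · intro a ha; simp only [Finset.mem_Icc] at *; omega
  · intro a ha; simp only [Finset.mem_Icc] at ha; omega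
  · intro a ha; simp only [Finset.mem_Icc] at ha; omega
  · intro m hm
    simp only [Finset.mem_Icc] at hm
    have e0 : (-1 : ℤ) + 1 = 0 := by ring
    have e1 : (n:ℤ) + (-1) + 1 - m = (n:ℤ) - m := by ring
    rw [e0, e1]
    have hch : chK K ((n:ℤ) - m) 0 = 1 := by
      unfold chK
      rw [if_neg (by omega)]
      simp
    rw [hch]
    have hm2 : ((m:ℤ) : K) = ((m.toNat : ℕ) : K) := by
      rw [show m = ((m.toNat : ℕ) : ℤ) from by omega]
      push_cast
      rfl
    rw [hm2, one_mul]

lemma harm_sum : ∀ n : ℕ, n ≤ p - 2 →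
    ∑ m ∈ Icc 1 n, ((m:K) + 2) * ((m:K) * ((m:K) + 1))⁻¹ = Hk K n + 1 - ((n:K) + 1)⁻¹ := by
  intro n
  induction n with
  | zero => intro _; simp [Hk]
  | succ n ih =>
    intro hn
    rw [Finset.sum_Icc_succ_top (by omega), ih (by omega), Hk_succ]
    have h1 : ((n:K) + 1) ≠ 0 := by
      have := castK_ne K p (show 0 < n+1 by omega) (by omega)
      push_cast at this
      exact this
    have h2 : ((n:K) + 2) ≠ 0 := by
      have := castK_ne K p (show 0 < n+2 by omega) (by omega)
      push_cast at this
      exact this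
    have hc1 : ((n+1:ℕ):K) = (n:K)+1 := by push_cast; ring
    rw [hc1]
    have e12 : (n:K)+1+1 = (n:K)+2 := by ring
    rw [e12]
    have hkey : ((n:K)+1+2) * (((n:K)+1) * ((n:K)+2))⁻¹
        = 2*((n:K)+1)⁻¹ - ((n:K)+2)⁻¹ := by
      rw [mul_inv]
      have e1 : ((n:K)+1+2) = 2*((n:K)+2) - ((n:K)+1) := by ring
      rw [e1]
      have e2 : (2*((n:K)+2) - ((n:K)+1)) * (((n:K)+1)⁻¹ * ((n:K)+2)⁻¹)
          = 2*(((n:K)+2) * ((n:K)+2)⁻¹)*((n:K)+1)⁻¹ - (((n:K)+1)*((n:K)+1)⁻¹)*((n:K)+2)⁻¹ := by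
        ring
      rw [e2, mul_inv_cancel₀ h2, mul_inv_cancel₀ h1]
      ring
    rw [hkey]
    ring

lemma lam_neg (n : ℕ) (hn : n ≤ p - 2) :
    lamK K (n:ℤ) (-1) = Hk K n + 1 - ((n:K) + 1)⁻¹ := by
  rw [lam_neg_sum K p hp]
  exact harm_sum K p hp n hn

end Kside

/-! ### Transfer machinery for part (c) -/

noncomputable def lamKn (K : Type) [Field K] (a b : ℕ) : K :=
  ∑ m ∈ Icc 1 a, (((a+b+1-m).choose (b+1) : ℕ) : K) * ((m:K)+2) * ((m:K) * ((m:K)+1))⁻¹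

def lamNat (p a b : ℕ) : ℕ :=
  ∑ m ∈ Icc 1 a, (a+b+1-m).choose (b+1) * (m+2) * ((p-1)! / (m*(m+1)))

def NZ (a b : ℕ) : ℤ := ((a+b+1).choose b : ℤ) - ((a+b+1).choose a : ℤ)

lemma NZ_Q (a b : ℕ) : ((NZ a b : ℤ) : ℚ) = NQ a b := by
  unfold NZ NQ
  push_cast
  ring

lemma lamK_natk (K : Type) [Field K] (a b : ℕ) : lamK K (a:ℤ) (b:ℤ) = lamKn K a b := by
  unfold lamK lamKn
  apply Finset.sum_nbij' (fun m : ℤ => m.toNat) (fun m : ℕ => (m : ℤ))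
  · intro x hx; simp only [Finset.mem_Icc] at *; omega
  · intro x hx; simp only [Finset.mem_Icc] at *; omega
  · intro x hx; simp only [Finset.mem_Icc] at hx; omega
  · intro x hx; simp only [Finset.mem_Icc] at hx; omega
  · intro m hm
    simp only [Finset.mem_Icc] at hm
    have hch : chK K ((a:ℤ) + (b:ℤ) + 1 - m) ((b:ℤ) + 1)
        = (((a+b+1-m.toNat).choose (b+1) : ℕ) : K) := by
      unfold chK
      rw [if_neg (by omega)]
      have e1 : ((a:ℤ) + (b:ℤ) + 1 - m).toNat = a+b+1-m.toNat := by omega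
      have e2 : ((b:ℤ) + 1).toNat = b+1 := by omega
      rw [e1, e2]
    rw [hch]
    have hm2 : ((m:ℤ) : K) = ((m.toNat : ℕ) : K) := by
      rw [show m = ((m.toNat : ℕ) : ℤ) from by omega]
      push_cast
      rfl
    rw [hm2]

lemma dvd_fact (p m : ℕ) (h1 : 1 ≤ m) (h2 : m + 1 ≤ p - 1) : m * (m+1) ∣ (p-1)! :=
  (Nat.coprime_self_add_right.mpr (Nat.coprime_one_right m)).mul_dvd_of_dvd_of_dvd
    (Nat.dvd_factorial h1 (by omega)) (Nat.dvd_factorial (by omega) h2)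

lemma TQ (p a b : ℕ) (hab : a + b + 1 ≤ p - 1) :
    (lamNat p a b : ℚ) = (((p-1)! : ℕ) : ℚ) * lamQ a b := by
  unfold lamNat lamQ
  rw [Nat.cast_sum, Finset.mul_sum]
  apply Finset.sum_congr rfl
  intro m hm
  simp only [mem_Icc] at hm
  have hdvd := dvd_fact p m hm.1 (by omega)
  have hne : ((m*(m+1) : ℕ) : ℚ) ≠ 0 := Nat.cast_ne_zero.mpr (Nat.mul_ne_zero (by omega) (by omega))
  rw [Nat.cast_mul, Nat.cast_mul, Nat.cast_div hdvd hne]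
  have hm0 : ((m:ℚ)) ≠ 0 := Nat.cast_ne_zero.mpr (by omega)
  have hm1 : ((m:ℚ)+1) ≠ 0 := by positivity
  push_cast
  field_simp

lemma TK (K : Type) [Field K] (p : ℕ) [CharP K p] (hp : 3 < p) (a b : ℕ)
    (hab : a + b + 1 ≤ p - 1) :
    ((lamNat p a b : ℕ) : K) = (((p-1)! : ℕ) : K) * lamKn K a b := by
  unfold lamNat lamKn
  rw [Nat.cast_sum, Finset.mul_sum]
  apply Finset.sum_congr rfl
  intro m hm
  simp only [mem_Icc] at hm
  have hdvd := dvd_fact p m hm.1 (by omega)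
  have hm0 : ((m:K)) ≠ 0 := castK_ne K p (by omega) (by omega)
  have hm1 : ((m:K)+1) ≠ 0 := by
    have := castK_ne K p (show 0 < m+1 by omega) (by omega)
    push_cast at this
    exact this
  have hDfac : (((p-1)! : ℕ) : K)
      = ((m:K) * ((m:K)+1)) * ((((p-1)! / (m*(m+1)) : ℕ)) : K) := by
    have h := Nat.mul_div_cancel' hdvd
    have h2 := congrArg (Nat.cast : ℕ → K) h
    push_cast at h2
    linear_combination -h2
  rw [hDfac]
  push_cast
  have hmm : ((m:K) * ((m:K)+1)) ≠ 0 := mul_ne_zero hm0 hm1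
  field_simp

lemma wittN_eq (K : Type) [Field K] (a b : ℕ) : wittN K (a:ℤ) (b:ℤ) = ((NZ a b : ℤ) : K) := by
  unfold wittN NZ chK
  rw [if_neg (by omega), if_neg (by omega)]
  have e1 : ((a:ℤ) + (b:ℤ) + 1).toNat = a+b+1 := by omega
  have e2 : ((b:ℤ)).toNat = b := by omega
  have e3 : ((a:ℤ)).toNat = a := by omega
  rw [e1, e2, e3]
  push_cast
  ring

lemma factK_ne (K : Type) [Field K] (p : ℕ) [CharP K p] (hp : 3 < p) :
    (((p-1)! : ℕ) : K) ≠ 0 := by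
  intro h
  rw [CharP.cast_eq_zero_iff K p] at h
  have := (Nat.Prime.dvd_factorial (hprime K p hp)).mp h
  omega

end St12

theorem statement12
    (K : Type) [Field K] (p : ℕ) [CharP K p] (hp : 3 < p) :
    (∀ j k : ℤ, 1 ≤ j → 1 ≤ k → j + k = (p : ℤ) - 1 →
      lamK K (j - 1) k + lamK K j (k - 1) =
        (-1 : K) ^ k * (2 * (k : K) + 1) * ((k : K) * ((k : K) + 1))⁻¹) ∧
    (∀ j k : ℤ, 1 ≤ j → 1 ≤ k → j + k = (p : ℤ) - 1 →
      lamK K j (k - 1) - lamK K k (j - 1) =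
        2 * (-1 : K) ^ k * lamK K j (-1) + 2 * (-1 : K) ^ (k + 1) * lamK K k (-1)
          + (-1 : K) ^ (k + 1) * (2 * (k : K) + 1) * ((k : K) * ((k : K) + 1))⁻¹) ∧
    (∀ i j k : ℤ, 0 ≤ i → 0 ≤ j → 0 ≤ k → i + j + k < (p : ℤ) - 1 →
      wittN K i j * lamK K (i + j) k - wittN K j k * lamK K i (j + k)
        + wittN K i k * lamK K j (i + k) + wittN K (j + k) i * lamK K j k
          - wittN K (i + k) j * lamK K i k = 0) := by
  refine ⟨?_, ?_, ?_⟩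
  · -- part (a)
    intro j k hj hk hsum
    obtain ⟨kn, rfl⟩ := Int.eq_ofNat_of_zero_le (show (0:ℤ) ≤ k by omega)
    have hkn1 : 1 ≤ kn := by exact_mod_cast hk
    have hkn2 : kn ≤ p - 2 := by omega
    have h1 := St12.LA K p hp (kn+1) (by omega) (by omega)
    have h2 := St12.LA K p hp kn (by omega) (by omega)
    rw [show ((p:ℤ) - 1 - ((kn+1 : ℕ) : ℤ)) = j - 1 from by push_cast; omega,
        show (((kn+1:ℕ):ℤ) - 1) = ((kn:ℕ):ℤ) from by push_cast; ring] at h1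
    rw [show ((p:ℤ) - 1 - ((kn:ℕ):ℤ)) = j from by omega] at h2
    rw [h1, h2, zpow_natCast]
    rw [St12.Hk_succ K kn]
    have hk0 : ((kn:K)) ≠ 0 := St12.castK_ne K p (by omega) (by omega)
    have hk1 : ((kn:K)+1) ≠ 0 := by
      have := St12.castK_ne K p (show 0 < kn+1 by omega) (by omega)
      push_cast at this
      exact this
    push_cast
    rw [pow_succ]
    field_simp
    ring
  · -- part (b)
    intro j k hj hk hsum
    obtain ⟨kn, rfl⟩ := Int.eq_ofNat_of_zero_le (show (0:ℤ) ≤ k by omega)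
    obtain ⟨jn, rfl⟩ := Int.eq_ofNat_of_zero_le (show (0:ℤ) ≤ j by omega)
    have hkn1 : 1 ≤ kn := by exact_mod_cast hk
    have hjn1 : 1 ≤ jn := by exact_mod_cast hj
    have hkn2 : kn ≤ p - 2 := by omega
    have hjn2 : jn ≤ p - 2 := by omega
    have hjk : jn + kn = p - 1 := by omega
    have h2 := St12.LA K p hp kn (by omega) (by omega)
    have h3 := St12.LA K p hp jn (by omega) (by omega)
    rw [show ((p:ℤ) - 1 - ((kn:ℕ):ℤ)) = ((jn:ℕ):ℤ) from by omega] at h2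
    rw [show ((p:ℤ) - 1 - ((jn:ℕ):ℤ)) = ((kn:ℕ):ℤ) from by omega] at h3
    have h4 := St12.lam_neg K p hp jn hjn2
    have h5 := St12.lam_neg K p hp kn hkn2
    have hpodd : Odd p := (St12.hprime K p hp).odd_of_ne_two (by omega)
    have hpar : (-1:K)^jn = (-1:K)^kn := by
      have heven : Even (jn + kn) := by
        rcases hpodd with ⟨t, ht⟩
        exact ⟨t, by omega⟩
      have h6 : (-1:K)^(jn+kn) = 1 := Even.neg_one_pow heven
      have h7 : (-1:K)^(kn+kn) = 1 := Even.neg_one_pow ⟨kn, rfl⟩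
      calc (-1:K)^jn = (-1:K)^jn * ((-1:K)^kn * (-1:K)^kn) := by
            rw [← pow_add]; rw [h7]; ring
        _ = ((-1:K)^(jn+kn)) * (-1:K)^kn := by rw [pow_add]; ring
        _ = (-1:K)^kn := by rw [h6]; ring
    rw [hpar] at h3
    have hjK : ((jn:ℕ):K) = -1 - (kn:K) := by
      have hcast : ((jn:ℕ):K) + ((kn:ℕ):K) + 1 = 0 := by
        have h8 : ((jn + kn + 1 : ℕ) : K) = ((p:ℕ) : K) := by rw [show jn+kn+1 = p from by omega]
        rw [CharP.cast_eq_zero K p] at h8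
        push_cast at h8
        linear_combination h8
      linear_combination hcast
    rw [h2, h3, h4, h5]
    rw [show ((kn:ℕ):ℤ) + 1 = ((kn+1:ℕ):ℤ) from by push_cast; ring, zpow_natCast, zpow_natCast,
      pow_succ]
    rw [hjK]
    have hk0 : ((kn:K)) ≠ 0 := St12.castK_ne K p (by omega) (by omega)
    have hk1 : ((kn:K)+1) ≠ 0 := by
      have := St12.castK_ne K p (show 0 < kn+1 by omega) (by omega)
      push_cast at this
      exact this
    have hmk : (-1 - (kn:K)) ≠ 0 := by
      intro h
      apply hk1
      linear_combination -h
    have hmk1 : (-1 - (kn:K) + 1) ≠ 0 := by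
      intro h
      apply hk0
      linear_combination -h
    push_cast
    field_simp
    ring
  · -- part (c)
    intro i j k hi hj hk hsum
    obtain ⟨In, rfl⟩ := Int.eq_ofNat_of_zero_le hi
    obtain ⟨Jn, rfl⟩ := Int.eq_ofNat_of_zero_le hj
    obtain ⟨Kn, rfl⟩ := Int.eq_ofNat_of_zero_le hk
    have hT : In + Jn + Kn ≤ p - 2 := by omega
    rw [show ((In:ℕ):ℤ) + ((Jn:ℕ):ℤ) = ((In + Jn : ℕ) : ℤ) from by push_cast; ring,
        show ((Jn:ℕ):ℤ) + ((Kn:ℕ):ℤ) = ((Jn + Kn : ℕ) : ℤ) from by push_cast; ring,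
        show ((In:ℕ):ℤ) + ((Kn:ℕ):ℤ) = ((In + Kn : ℕ) : ℤ) from by push_cast; ring]
    rw [St12.wittN_eq K In Jn, St12.wittN_eq K Jn Kn, St12.wittN_eq K In Kn,
        St12.wittN_eq K (Jn+Kn) In, St12.wittN_eq K (In+Kn) Jn,
        St12.lamK_natk K (In+Jn) Kn, St12.lamK_natk K In (Jn+Kn), St12.lamK_natk K Jn (In+Kn),
        St12.lamK_natk K Jn Kn, St12.lamK_natk K In Kn]
    have hZ : (St12.NZ In Jn) * (St12.lamNat p (In+Jn) Kn : ℤ)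
        - St12.NZ Jn Kn * (St12.lamNat p In (Jn+Kn) : ℤ)
        + St12.NZ In Kn * (St12.lamNat p Jn (In+Kn) : ℤ)
        + St12.NZ (Jn+Kn) In * (St12.lamNat p Jn Kn : ℤ)
        - St12.NZ (In+Kn) Jn * (St12.lamNat p In Kn : ℤ) = 0 := by
      have hq := St12.mainQ In Jn Kn
      have hcast : (((St12.NZ In Jn) * (St12.lamNat p (In+Jn) Kn : ℤ)
          - St12.NZ Jn Kn * (St12.lamNat p In (Jn+Kn) : ℤ)
          + St12.NZ In Kn * (St12.lamNat p Jn (In+Kn) : ℤ)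
          + St12.NZ (Jn+Kn) In * (St12.lamNat p Jn Kn : ℤ)
          - St12.NZ (In+Kn) Jn * (St12.lamNat p In Kn : ℤ) : ℤ) : ℚ) = 0 := by
        push_cast
        rw [St12.TQ p (In+Jn) Kn (by omega), St12.TQ p In (Jn+Kn) (by omega),
            St12.TQ p Jn (In+Kn) (by omega), St12.TQ p Jn Kn (by omega),
            St12.TQ p In Kn (by omega),
            St12.NZ_Q In Jn, St12.NZ_Q Jn Kn, St12.NZ_Q In Kn,
            St12.NZ_Q (Jn+Kn) In, St12.NZ_Q (In+Kn) Jn]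
        linear_combination (Nat.factorial (p-1) : ℚ) * hq
      rwa [Int.cast_eq_zero] at hcast
    have hc := congrArg (fun z : ℤ => (z : K)) hZ
    simp only [Int.cast_sub, Int.cast_add, Int.cast_mul, Int.cast_natCast, Int.cast_zero] at hc
    rw [St12.TK K p hp (In+Jn) Kn (by omega), St12.TK K p hp In (Jn+Kn) (by omega),
        St12.TK K p hp Jn (In+Kn) (by omega), St12.TK K p hp Jn Kn (by omega),
        St12.TK K p hp In Kn (by omega)] at hc
    have hD := St12.factK_ne K p hp
    have hfin : ((Nat.factorial (p-1) : ℕ) : K) *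
        (((St12.NZ In Jn : ℤ) : K) * St12.lamKn K (In+Jn) Kn
          - ((St12.NZ Jn Kn : ℤ) : K) * St12.lamKn K In (Jn+Kn)
          + ((St12.NZ In Kn : ℤ) : K) * St12.lamKn K Jn (In+Kn)
          + ((St12.NZ (Jn+Kn) In : ℤ) : K) * St12.lamKn K Jn Kn
          - ((St12.NZ (In+Kn) Jn : ℤ) : K) * St12.lamKn K In Kn) = 0 := by
      linear_combination hc
    rcases mul_eq_zero.mp hfin with h | h
    · exact absurd h hD
    · exact h
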